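/- arXiv:1206.5122 — 3 statements merged into one kernel-verified Lean document; each statement's English description precedes it below -/
import Mathlib

section
/- For a complex number a with Re(a) > 0 and any real ξ, ∫_{-∞}^{∞} Γ(a + it) Γ(a - it) e^{-iξt} dt = 2π Γ(2a) / (4^a cosh^{2a}(ξ/2)). -/
open Complex Real MeasureTheory Set
open scoped FourierTransform

noncomputable section

namespace RamanujanAux

lemma cpow_pos_eq {x : ℝ} (hx : 0 < x) (w : ℂ) :
    (x : ℂ) ^ w = Complex.exp (w * Real.log x) := by
  rw [Complex.cpow_def_of_ne_zero (by exact_mod_cast hx.ne'), ← Complex.ofReal_log hx.le,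
    mul_comm]

lemma ofReal_eq_exp {x : ℝ} (hx : 0 < x) : (x : ℂ) = Complex.exp (Real.log x) := by
  rw [← Complex.ofReal_exp, Real.exp_log hx]

/-- The function `ξ ↦ (2 cosh (ξ/2))^(-2a)`, written via `exp`/`log`. -/
def rg (a : ℂ) (ξ : ℝ) : ℂ := Complex.exp (-2 * a * Real.log (2 * Real.cosh (ξ / 2)))

lemma two_cosh_pos (ξ : ℝ) : 0 < 2 * Real.cosh (ξ / 2) := by positivity

lemma rg_even (a : ℂ) (ξ : ℝ) : rg a (-ξ) = rg a ξ := by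
  simp [rg, neg_div, Real.cosh_neg]

lemma norm_rg (a : ℂ) (ξ : ℝ) :
    ‖rg a ξ‖ = Real.exp (-2 * a.re * Real.log (2 * Real.cosh (ξ / 2))) := by
  rw [rg, Complex.norm_exp]
  congr 1
  simp [Complex.mul_re]

lemma exp_abs_le_two_cosh (x : ℝ) : Real.exp |x| ≤ 2 * Real.cosh x := by
  rw [Real.cosh_eq]
  rcases abs_cases x with ⟨h, _⟩ | ⟨h, _⟩ <;> rw [h] <;>
    nlinarith [Real.exp_pos x, Real.exp_pos (-x)]

lemma norm_rg_le {a : ℂ} (ha : 0 < a.re) (ξ : ℝ) :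
    ‖rg a ξ‖ ≤ Real.exp (-a.re * |ξ|) := by
  rw [norm_rg]
  apply Real.exp_le_exp.2
  have h1 : |ξ| / 2 ≤ Real.log (2 * Real.cosh (ξ / 2)) := by
    rw [Real.le_log_iff_exp_le (two_cosh_pos ξ)]
    have := exp_abs_le_two_cosh (ξ / 2)
    rwa [abs_div, abs_of_pos (by norm_num : (0:ℝ) < 2)] at this
  nlinarith

lemma integrable_exp_neg_abs {b : ℝ} (hb : 0 < b) :
    Integrable fun x : ℝ => Real.exp (-b * |x|) := by
  have h1 : IntegrableOn (fun x : ℝ => Real.exp (-b * |x|)) (Ioi 0) := by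
    refine (exp_neg_integrableOn_Ioi 0 hb).congr_fun (fun x hx => ?_) measurableSet_Ioi
    rw [abs_of_pos hx]
  have h1' : IntegrableOn (fun x : ℝ => Real.exp (-b * |x|)) (Ici 0) :=
    (integrableOn_Ici_iff_integrableOn_Ioi (by simp)).2 h1
  have h2 : IntegrableOn (fun x : ℝ => Real.exp (-b * |x|)) (Iic 0) := by
    have h3 := ((integrable_indicator_iff measurableSet_Ici).2 h1').comp_neg
    refine (integrable_indicator_iff measurableSet_Iic).1 (h3.congr (ae_of_all _ fun x => ?_))
    by_cases hx : x ≤ 0 <;>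
      simp [Set.indicator_apply, hx, neg_nonneg, abs_neg, not_le.1]
  rw [← integrableOn_univ, ← Set.Iic_union_Ioi (a := (0:ℝ))]
  exact h2.union h1

lemma continuous_rg (a : ℂ) : Continuous (rg a) := by
  apply Complex.continuous_exp.comp
  refine continuous_const.mul (Complex.continuous_ofReal.comp ?_)
  exact (continuous_const.mul (Real.continuous_cosh.comp (continuous_id.div_const 2))).log
    fun x => (two_cosh_pos x).ne'

lemma integrable_rg {a : ℂ} (ha : 0 < a.re) : Integrable (rg a) := by
  refine ((integrable_exp_neg_abs ha).mono' (continuous_rg a).aestronglyMeasurable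
    (ae_of_all _ fun x => ?_))
  exact norm_rg_le ha x

def th (ξ : ℝ) : ℝ := Real.sinh (ξ / 2) / Real.cosh (ξ / 2)

def rg1 (a : ℂ) (ξ : ℝ) : ℂ := -a * (th ξ : ℂ) * rg a ξ

def rg2 (a : ℂ) (ξ : ℝ) : ℂ :=
  -a * (((1 - th ξ ^ 2) / 2 : ℝ) : ℂ) * rg a ξ + -a * (th ξ : ℂ) * rg1 a ξ

lemma hasDerivAt_half (ξ : ℝ) : HasDerivAt (fun ξ : ℝ => ξ / 2) (1 / 2) ξ :=
  (hasDerivAt_id ξ).div_const 2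

lemma hasDerivAt_two_cosh (ξ : ℝ) :
    HasDerivAt (fun ξ : ℝ => 2 * Real.cosh (ξ / 2)) (Real.sinh (ξ / 2)) ξ := by
  have h := ((Real.hasDerivAt_cosh (ξ / 2)).comp ξ (hasDerivAt_half ξ)).const_mul 2
  refine h.congr_deriv ?_
  ring

lemma hasDerivAt_log_two_cosh (ξ : ℝ) :
    HasDerivAt (fun ξ : ℝ => Real.log (2 * Real.cosh (ξ / 2)))
      (Real.sinh (ξ / 2) / (2 * Real.cosh (ξ / 2))) ξ :=
  (hasDerivAt_two_cosh ξ).log (two_cosh_pos ξ).ne'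

lemma hasDerivAt_rg (a : ℂ) (ξ : ℝ) : HasDerivAt (rg a) (rg1 a ξ) ξ := by
  have h1 := (((hasDerivAt_log_two_cosh ξ).ofReal_comp).const_mul (-2 * a)).cexp
  refine h1.congr_deriv ?_
  rw [rg1, rg, th]
  have hc := (Real.cosh_pos (ξ / 2)).ne'
  push_cast
  field_simp

lemma hasDerivAt_th (ξ : ℝ) : HasDerivAt th ((1 - th ξ ^ 2) / 2) ξ := by
  have hs := (Real.hasDerivAt_sinh (ξ / 2)).comp ξ (hasDerivAt_half ξ)
  have hc := (Real.hasDerivAt_cosh (ξ / 2)).comp ξ (hasDerivAt_half ξ)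
  have h := hs.div hc (Real.cosh_pos (ξ / 2)).ne'
  refine h.congr_deriv ?_
  have hc0 := (Real.cosh_pos (ξ / 2)).ne'
  rw [th]
  simp only [Function.comp_apply]
  field_simp

lemma hasDerivAt_rg1 (a : ℂ) (ξ : ℝ) : HasDerivAt (rg1 a) (rg2 a ξ) ξ := by
  have h1 := ((hasDerivAt_th ξ).ofReal_comp.const_mul (-a)).mul (hasDerivAt_rg a ξ)
  exact h1.congr_deriv rfl

lemma abs_th_le (ξ : ℝ) : |th ξ| ≤ 1 := by
  rw [th, abs_div, abs_of_pos (Real.cosh_pos _), div_le_one (Real.cosh_pos _),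
    Real.abs_sinh, ← Real.cosh_abs]
  exact (Real.sinh_lt_cosh _).le

lemma norm_rg1_le (a : ℂ) (ξ : ℝ) : ‖rg1 a ξ‖ ≤ ‖a‖ * ‖rg a ξ‖ := by
  rw [rg1]
  rw [norm_mul, norm_mul, norm_neg]
  have h1 : ‖(th ξ : ℂ)‖ ≤ 1 := by
    rw [Complex.norm_real, Real.norm_eq_abs]; exact abs_th_le ξ
  have h2 : (0:ℝ) ≤ ‖a‖ := norm_nonneg _
  have h3 : (0:ℝ) ≤ ‖rg a ξ‖ := norm_nonneg _
  nlinarith [mul_nonneg (mul_nonneg h2 (sub_nonneg.2 h1)) h3]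

lemma norm_rg2_le (a : ℂ) (ξ : ℝ) :
    ‖rg2 a ξ‖ ≤ (‖a‖ + ‖a‖ * ‖a‖) * ‖rg a ξ‖ := by
  have key : ‖(((1 - th ξ ^ 2) / 2 : ℝ) : ℂ)‖ ≤ 1 := by
    rw [Complex.norm_real, Real.norm_eq_abs]
    have := abs_th_le ξ
    rw [abs_le] at this ⊢
    constructor <;> nlinarith [this.1, this.2]
  have h1 : ‖(th ξ : ℂ)‖ ≤ 1 := by
    rw [Complex.norm_real, Real.norm_eq_abs]; exact abs_th_le ξ
  have h4 := norm_rg1_le a ξ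
  have h2 : (0:ℝ) ≤ ‖a‖ := norm_nonneg _
  have h3 : (0:ℝ) ≤ ‖rg a ξ‖ := norm_nonneg _
  calc ‖rg2 a ξ‖ ≤ ‖-a * (((1 - th ξ ^ 2) / 2 : ℝ) : ℂ) * rg a ξ‖ +
      ‖-a * (th ξ : ℂ) * rg1 a ξ‖ := norm_add_le _ _
    _ ≤ (‖a‖ + ‖a‖ * ‖a‖) * ‖rg a ξ‖ := by
      rw [norm_mul, norm_mul, norm_mul, norm_mul, norm_neg]
      nlinarith [mul_nonneg (mul_nonneg h2 (sub_nonneg.2 key)) h3,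
        mul_nonneg (mul_nonneg h2 (sub_nonneg.2 h1)) (norm_nonneg (rg1 a ξ)),
        mul_le_mul_of_nonneg_left h4 h2, norm_nonneg (rg1 a ξ)]

lemma continuous_th : Continuous th :=
  (Real.continuous_sinh.comp (continuous_id.div_const 2)).div
    (Real.continuous_cosh.comp (continuous_id.div_const 2)) fun x => (Real.cosh_pos _).ne'

lemma continuous_rg1 (a : ℂ) : Continuous (rg1 a) :=
  ((continuous_const.mul (Complex.continuous_ofReal.comp continuous_th)).mul (continuous_rg a))

lemma continuous_rg2 (a : ℂ) : Continuous (rg2 a) := by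
  refine Continuous.add ?_ ?_
  · exact (continuous_const.mul (Complex.continuous_ofReal.comp
      (((continuous_const.sub (continuous_th.pow 2)).div_const 2)))).mul (continuous_rg a)
  · exact (continuous_const.mul (Complex.continuous_ofReal.comp continuous_th)).mul
      (continuous_rg1 a)

lemma integrable_rg1 {a : ℂ} (ha : 0 < a.re) : Integrable (rg1 a) :=
  ((integrable_rg ha).norm.const_mul ‖a‖).mono' (continuous_rg1 a).aestronglyMeasurable
    (ae_of_all _ fun x => norm_rg1_le a x)

lemma integrable_rg2 {a : ℂ} (ha : 0 < a.re) : Integrable (rg2 a) :=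
  ((integrable_rg ha).norm.const_mul (‖a‖ + ‖a‖ * ‖a‖)).mono'
    (continuous_rg2 a).aestronglyMeasurable (ae_of_all _ fun x => norm_rg2_le a x)

lemma continuous_fourier_rg {a : ℂ} (ha : 0 < a.re) : Continuous (𝓕 (rg a)) :=
  VectorFourier.fourierIntegral_continuous Real.continuous_fourierChar
    (by exact continuous_inner) (integrable_rg ha)

lemma norm_fourier_le (f : ℝ → ℂ) (w : ℝ) : ‖𝓕 f w‖ ≤ ∫ v, ‖f v‖ :=
  VectorFourier.norm_fourierIntegral_le_integral_norm _ _ _ _ _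

lemma integrable_fourier_rg {a : ℂ} (ha : 0 < a.re) : Integrable (𝓕 (rg a)) := by
  have hd1 : deriv (rg a) = rg1 a := funext fun ξ => (hasDerivAt_rg a ξ).deriv
  have hd2 : deriv (rg1 a) = rg2 a := funext fun ξ => (hasDerivAt_rg1 a ξ).deriv
  have hdiff : Differentiable ℝ (rg a) := fun ξ => (hasDerivAt_rg a ξ).differentiableAt
  have hdiff1 : Differentiable ℝ (rg1 a) := fun ξ => (hasDerivAt_rg1 a ξ).differentiableAt
  have h1 : 𝓕 (rg1 a) = fun x : ℝ => (2 * ↑π * Complex.I * ↑x) • 𝓕 (rg a) x := by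
    rw [← hd1]
    exact Real.fourier_deriv (integrable_rg ha) hdiff (hd1 ▸ integrable_rg1 ha)
  have h2 : 𝓕 (rg2 a) = fun x : ℝ => (2 * ↑π * Complex.I * ↑x) • 𝓕 (rg1 a) x := by
    rw [← hd2]
    exact Real.fourier_deriv (integrable_rg1 ha) hdiff1 (hd2 ▸ integrable_rg2 ha)
  set C0 := ∫ x : ℝ, ‖rg a x‖ with hC0
  set C2 := ∫ x : ℝ, ‖rg2 a x‖ with hC2
  have key : ∀ x : ℝ, ‖𝓕 (rg a) x‖ ≤ (C0 + C2) * (1 + x ^ 2)⁻¹ := by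
    intro x
    have hb0 : ‖𝓕 (rg a) x‖ ≤ C0 := norm_fourier_le _ x
    have hb2 : ‖𝓕 (rg2 a) x‖ ≤ C2 := norm_fourier_le _ x
    have e2 : ‖𝓕 (rg2 a) x‖ = (2 * π * |x|) ^ 2 * ‖𝓕 (rg a) x‖ := by
      rw [h2]
      simp only [h1]
      rw [norm_smul, norm_smul, ← mul_assoc, norm_mul, norm_mul, norm_mul]
      simp [Complex.norm_real, Real.norm_eq_abs, abs_of_pos Real.pi_pos]
      ring_nf
      exact Or.inl trivial
    have hx2 : x ^ 2 * ‖𝓕 (rg a) x‖ ≤ C2 := by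
      rw [e2] at hb2
      have habs : (2 * π * |x|) ^ 2 = 4 * π ^ 2 * x ^ 2 := by
        rw [mul_pow, mul_pow, _root_.sq_abs]; ring
      rw [habs] at hb2
      nlinarith [Real.pi_gt_three, mul_nonneg (sq_nonneg x) (norm_nonneg (𝓕 (rg a) x)),
        mul_nonneg (mul_nonneg (sq_nonneg x) (norm_nonneg (𝓕 (rg a) x)))
          (by nlinarith [Real.pi_gt_three] : (0:ℝ) ≤ 4 * π ^ 2 - 1)]
    have hpos : (0:ℝ) < 1 + x ^ 2 := by positivity
    rw [← div_eq_mul_inv, le_div_iff₀ hpos]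
    nlinarith
  refine ((integrable_inv_one_add_sq.const_mul (C0 + C2)).mono'
    ((continuous_fourier_rg ha).aestronglyMeasurable) (ae_of_all _ fun x => ?_))
  exact key x

def lgt (ξ : ℝ) : ℝ := (1 + Real.exp (-ξ))⁻¹

def lgt' (ξ : ℝ) : ℝ := Real.exp (-ξ) / (1 + Real.exp (-ξ)) ^ 2

lemma one_add_exp_pos (ξ : ℝ) : 0 < 1 + Real.exp (-ξ) := by positivity

lemma hasDerivAt_lgt (ξ : ℝ) : HasDerivAt lgt (lgt' ξ) ξ := by
  have h : HasDerivAt (fun ξ : ℝ => 1 + Real.exp (-ξ)) (-Real.exp (-ξ)) ξ := by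
    simpa using ((Real.hasDerivAt_exp (-ξ)).comp ξ ((hasDerivAt_id ξ).neg)).const_add 1
  have := h.inv (one_add_exp_pos ξ).ne'
  exact this.congr_deriv (by simp [lgt', neg_div])

lemma strictMono_lgt : StrictMono lgt := by
  intro x y hxy
  have h1 : Real.exp (-y) < Real.exp (-x) := Real.exp_lt_exp.2 (by linarith)
  have := one_add_exp_pos y
  exact inv_strictAnti₀ (one_add_exp_pos y) (by linarith)

lemma lgt_mem (ξ : ℝ) : lgt ξ ∈ Ioo (0:ℝ) 1 := by
  constructor
  · exact inv_pos.2 (one_add_exp_pos ξ)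
  · rw [lgt, inv_lt_one_iff₀]
    right
    nlinarith [Real.exp_pos (-ξ)]

lemma lgt_image : lgt '' univ = Ioo (0:ℝ) 1 := by
  apply Subset.antisymm
  · rintro u ⟨ξ, -, rfl⟩
    exact lgt_mem ξ
  · rintro u ⟨hu0, hu1⟩
    refine ⟨-Real.log (u⁻¹ - 1), mem_univ _, ?_⟩
    have h1 : (1:ℝ) < u⁻¹ := (one_lt_inv₀ hu0).2 hu1
    rw [lgt, neg_neg, Real.exp_log (by linarith)]
    rw [add_sub_cancel, inv_inv]

lemma one_sub_lgt (ξ : ℝ) : 1 - lgt ξ = Real.exp (-ξ) / (1 + Real.exp (-ξ)) := by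
  rw [lgt]
  field_simp
  ring

lemma lgt'_pos (ξ : ℝ) : 0 < lgt' ξ := by
  rw [lgt']
  positivity

lemma log_two_cosh (ξ : ℝ) :
    Real.log (2 * Real.cosh (ξ / 2)) = ξ / 2 + Real.log (1 + Real.exp (-ξ)) := by
  have h : 2 * Real.cosh (ξ / 2) = Real.exp (ξ / 2) * (1 + Real.exp (-ξ)) := by
    rw [Real.cosh_eq, mul_add, mul_one, ← Real.exp_add]
    ring_nf
  rw [h, Real.log_mul (Real.exp_ne_zero _) (one_add_exp_pos ξ).ne', Real.log_exp]

lemma fourier_rg {a : ℂ} (ha : 0 < a.re) (s : ℝ) :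
    Complex.Gamma (a + Complex.I * (2 * π * s)) * Complex.Gamma (a - Complex.I * (2 * π * s)) =
      Complex.Gamma (2 * a) * 𝓕 (rg a) s := by
  set c : ℂ := a - Complex.I * (2 * π * s) with hc_def
  set d : ℂ := a + Complex.I * (2 * π * s) with hd_def
  have hc : 0 < c.re := by
    simp only [hc_def, Complex.sub_re, Complex.mul_re, Complex.I_re, Complex.I_im]
    simpa using ha
  have hd : 0 < d.re := by
    simp only [hd_def, Complex.add_re, Complex.mul_re, Complex.I_re, Complex.I_im]
    simpa using ha
  have hbeta := Complex.Gamma_mul_Gamma_eq_betaIntegral hc hd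
  have hcd : c + d = 2 * a := by rw [hc_def, hd_def]; ring
  rw [hcd] at hbeta
  have h𝓕 : 𝓕 (rg a) s = Complex.betaIntegral c d := by
    rw [Real.fourier_real_eq_integral_exp_smul, Complex.betaIntegral,
      intervalIntegral.integral_of_le zero_le_one, MeasureTheory.integral_Ioc_eq_integral_Ioo,
      ← lgt_image,
      integral_image_eq_integral_abs_deriv_smul MeasurableSet.univ
        (fun x _ => (hasDerivAt_lgt x).hasDerivWithinAt) strictMono_lgt.injective.injOn _,
      MeasureTheory.setIntegral_univ]
    symm
    congr 1
    funext ξ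
    have h0 : 0 < lgt ξ := (lgt_mem ξ).1
    have h1 : lgt ξ < 1 := (lgt_mem ξ).2
    have h2 : 0 < 1 - lgt ξ := by linarith
    have h3 : 0 < lgt' ξ := lgt'_pos ξ
    have hcast : (1 : ℂ) - (lgt ξ : ℂ) = ((1 - lgt ξ : ℝ) : ℂ) := by push_cast; ring
    rw [cpow_pos_eq h0, hcast, cpow_pos_eq h2, abs_of_pos h3, Complex.real_smul,
      ofReal_eq_exp h3, smul_eq_mul, rg, ← Complex.exp_add, ← Complex.exp_add,
      ← Complex.exp_add]
    congr 1
    have hlgt' : Real.log (lgt' ξ) = -ξ - 2 * Real.log (1 + Real.exp (-ξ)) := by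
      rw [lgt', Real.log_div (Real.exp_ne_zero _) (pow_ne_zero _ (one_add_exp_pos ξ).ne'),
        Real.log_exp, Real.log_pow]
      push_cast
      ring
    have hlgt : Real.log (lgt ξ) = -Real.log (1 + Real.exp (-ξ)) := by
      rw [lgt, Real.log_inv]
    have h1lgt : Real.log (1 - lgt ξ) = -ξ - Real.log (1 + Real.exp (-ξ)) := by
      rw [one_sub_lgt, Real.log_div (Real.exp_ne_zero _) (one_add_exp_pos ξ).ne', Real.log_exp]
    rw [hlgt', hlgt, h1lgt, log_two_cosh, hc_def, hd_def]
    push_cast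
    ring
  rw [h𝓕, ← hbeta]
  ring

lemma fourier_fourier_rg {a : ℂ} (ha : 0 < a.re) (ξ : ℝ) :
    𝓕 (𝓕 (rg a)) ξ = rg a ξ := by
  have h1 := Real.fourierInv_eq_fourier_neg (𝓕 (rg a)) (-ξ)
  rw [neg_neg] at h1
  rw [← h1, MeasureTheory.Integrable.fourierInv_fourier_eq (integrable_rg ha)
    (integrable_fourier_rg ha) (continuous_rg a).continuousAt]
  exact rg_even a ξ

lemma rg_eq_inv (a : ℂ) (ξ : ℝ) :
    rg a ξ = (Complex.exp (2 * a * Real.log (2 * Real.cosh (ξ / 2))))⁻¹ := by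
  rw [rg, ← Complex.exp_neg]
  congr 1
  ring

lemma denom_eq (a : ℂ) (ξ : ℝ) :
    (4 : ℂ) ^ a * ((Real.cosh (ξ / 2) : ℝ) : ℂ) ^ (2 * a) =
      Complex.exp (2 * a * Real.log (2 * Real.cosh (ξ / 2))) := by
  rw [show (4 : ℂ) = ((4 : ℝ) : ℂ) by norm_num, cpow_pos_eq (by norm_num : (0:ℝ) < 4) a,
    cpow_pos_eq (Real.cosh_pos (ξ / 2)) (2 * a), ← Complex.exp_add]
  congr 1
  have h4 : Real.log 4 = 2 * Real.log 2 := by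
    rw [show (4:ℝ) = 2 ^ 2 by norm_num, Real.log_pow]
    push_cast
    ring
  have hl : Real.log (2 * Real.cosh (ξ / 2)) = Real.log 2 + Real.log (Real.cosh (ξ / 2)) :=
    Real.log_mul two_ne_zero (Real.cosh_pos _).ne'
  rw [h4, hl]
  push_cast
  ring

end RamanujanAux

open RamanujanAux

theorem ramanujan_formula (a : ℂ) (ha : 0 < a.re) (ξ : ℝ) :
    ∫ t : ℝ, Complex.Gamma (a + Complex.I * t) * Complex.Gamma (a - Complex.I * t) *
        Complex.exp (-Complex.I * ξ * t) =
      2 * Real.pi * Complex.Gamma (2 * a) /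
        ((4 : ℂ) ^ a * ((Real.cosh (ξ / 2) : ℝ) : ℂ) ^ (2 * a)) := by
  set F : ℝ → ℂ := fun t => Complex.Gamma (a + Complex.I * t) * Complex.Gamma (a - Complex.I * t) *
    Complex.exp (-Complex.I * ξ * t) with hF_def
  have h2π : (0:ℝ) < 2 * π := by positivity
  have hresc : ∫ t : ℝ, F t = (2 * π) • ∫ x : ℝ, F (2 * π * x) := by
    rw [MeasureTheory.Measure.integral_comp_mul_left F (2 * π), abs_of_pos (inv_pos.2 h2π),
      smul_smul, mul_inv_cancel₀ h2π.ne', one_smul]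
  have hF : ∀ x : ℝ, F (2 * π * x) =
      Complex.Gamma (2 * a) * (Complex.exp (((-2 * π * x * ξ : ℝ) : ℂ) * Complex.I) •
        𝓕 (rg a) x) := by
    intro x
    have h := fourier_rg ha x
    simp only [hF_def, smul_eq_mul]
    push_cast
    rw [h]
    have e : Complex.exp (-Complex.I * (ξ:ℂ) * (2 * (π:ℂ) * (x:ℂ))) =
        Complex.exp ((-2 * (π:ℂ) * (x:ℂ) * (ξ:ℂ)) * Complex.I) := by
      congr 1
      ring
    rw [e]
    ring
  rw [hresc]
  have : ∫ x : ℝ, F (2 * π * x) = Complex.Gamma (2 * a) * 𝓕 (𝓕 (rg a)) ξ := by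
    rw [MeasureTheory.integral_congr_ae (ae_of_all _ hF), MeasureTheory.integral_const_mul]
    congr 1
    rw [Real.fourier_real_eq_integral_exp_smul]
  rw [this, fourier_fourier_rg ha ξ, rg_eq_inv, denom_eq]
  rw [Complex.real_smul, div_eq_mul_inv]
  push_cast
  ring
end
end

section
/- For a complex a with Re(a) not zero or a negative integer, define I(a, ξ) = ∫_{-∞}^{∞} a Γ(a - it) Γ(a + it) e^{-itξ} dt for real ξ. Then I(a, ·) is twice differentiable in ξ and satisfies the ODE (d²/dξ²) I(a, ξ) - a² I(a, ξ) = -(a/(a+1)) I(a+1, ξ). -/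
open Complex Real MeasureTheory

lemma norm_Gamma_le_re {s : ℂ} (hs : 0 < s.re) : ‖Complex.Gamma s‖ ≤ Real.Gamma s.re := by
  rw [Complex.Gamma_eq_integral hs, Real.Gamma_eq_integral hs, Complex.GammaIntegral]
  refine (norm_integral_le_integral_norm _).trans (le_of_eq ?_)
  refine setIntegral_congr_fun measurableSet_Ioi fun x hx => ?_
  rw [norm_mul, Complex.norm_real, Real.norm_of_nonneg (Real.exp_pos _).le,
    Complex.norm_cpow_eq_rpow_re_of_pos hx]
  simp

lemma pair_lb (z : ℂ) (hz : z.re ≠ 0) :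
    ∃ e > 0, ∀ t : ℝ, e * Real.sqrt (1 + t ^ 2) ≤ ‖(z - Complex.I * t) * (z + Complex.I * t)‖ := by
  refine ⟨Real.sqrt (min (z.re ^ 4) (2 * z.re ^ 2) / 2), Real.sqrt_pos.mpr (by positivity), fun t => ?_⟩
  rw [norm_mul, Complex.norm_def, Complex.norm_def,
    ← Real.sqrt_mul (by positivity), ← Real.sqrt_mul (Complex.normSq_nonneg _)]
  refine Real.sqrt_le_sqrt ?_
  have hM1 := min_le_left (z.re ^ 4) (2 * z.re ^ 2)
  have hM2 := min_le_right (z.re ^ 4) (2 * z.re ^ 2)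
  simp only [Complex.normSq_apply, Complex.sub_re, Complex.sub_im, Complex.add_re, Complex.add_im,
    Complex.mul_re, Complex.mul_im, Complex.I_re, Complex.I_im, Complex.ofReal_re, Complex.ofReal_im]
  nlinarith [mul_le_mul_of_nonneg_right hM2 (sq_nonneg t), sq_nonneg (z.im ^ 2 - t ^ 2),
    sq_nonneg (z.re * z.im), sq_nonneg z.re, sq_nonneg t]

lemma line_ne_zero {b : ℂ} (hb : b.re ≠ 0) (t : ℝ) :
    b - Complex.I * t ≠ 0 ∧ b + Complex.I * t ≠ 0 := by
  constructor <;> intro h <;> apply hb <;>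
    · have := congrArg Complex.re h
      simpa using this

lemma Grec {b : ℂ} (hb : b.re ≠ 0) (t : ℝ) :
    Complex.Gamma (b + 1 - Complex.I * t) * Complex.Gamma (b + 1 + Complex.I * t) =
      ((b - Complex.I * t) * (b + Complex.I * t)) *
        (Complex.Gamma (b - Complex.I * t) * Complex.Gamma (b + Complex.I * t)) := by
  obtain ⟨h1, h2⟩ := line_ne_zero hb t
  rw [show b + 1 - Complex.I * t = b - Complex.I * t + 1 by ring,
    show b + 1 + Complex.I * t = b + Complex.I * t + 1 by ring,
    Complex.Gamma_add_one _ h1, Complex.Gamma_add_one _ h2]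
  ring

lemma Giter (a : ℂ) (ha : ∀ n : ℕ, a.re ≠ -n) (n : ℕ) :
    ∃ C > 0, ∀ t : ℝ,
      Real.sqrt (1 + t ^ 2) ^ n * ‖Complex.Gamma (a - Complex.I * t) * Complex.Gamma (a + Complex.I * t)‖ ≤
      C * ‖Complex.Gamma (a + n - Complex.I * t) * Complex.Gamma (a + n + Complex.I * t)‖ := by
  induction n with
  | zero => exact ⟨1, one_pos, fun t => by simp⟩
  | succ n ih =>
    obtain ⟨C, hC, hb⟩ := ih
    have hre : (a + (n : ℂ)).re ≠ 0 := by
      have := ha n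
      simp only [Complex.add_re, Complex.natCast_re]
      intro h; exact this (by linarith)
    obtain ⟨e, he, hpair⟩ := pair_lb (a + n) hre
    refine ⟨C / e, by positivity, fun t => ?_⟩
    have hrec := Grec hre t
    have hcast : (a : ℂ) + (n + 1 : ℕ) = a + n + 1 := by push_cast; ring
    rw [hcast, hrec]
    have hs : Real.sqrt (1 + t ^ 2) ≤ ‖(a + n - Complex.I * t) * (a + n + Complex.I * t)‖ / e := by
      rw [le_div_iff₀ he]
      linarith [hpair t]
    calc Real.sqrt (1 + t ^ 2) ^ (n + 1) *
          ‖Complex.Gamma (a - Complex.I * t) * Complex.Gamma (a + Complex.I * t)‖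
        = Real.sqrt (1 + t ^ 2) * (Real.sqrt (1 + t ^ 2) ^ n *
            ‖Complex.Gamma (a - Complex.I * t) * Complex.Gamma (a + Complex.I * t)‖) := by ring
      _ ≤ (‖(a + n - Complex.I * t) * (a + n + Complex.I * t)‖ / e) *
            (C * ‖Complex.Gamma (a + n - Complex.I * t) * Complex.Gamma (a + n + Complex.I * t)‖) := by
          apply mul_le_mul hs (hb t) (by positivity) (by positivity)
      _ = C / e * (‖(a + n - Complex.I * t) * (a + n + Complex.I * t)‖ *
            ‖Complex.Gamma (a + n - Complex.I * t) * Complex.Gamma (a + n + Complex.I * t)‖) := by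
          ring
      _ = C / e * ‖(a + n - Complex.I * t) * (a + n + Complex.I * t) *
            (Complex.Gamma (a + n - Complex.I * t) * Complex.Gamma (a + n + Complex.I * t))‖ := by
          simp [norm_mul]

lemma decay (a : ℂ) (ha : ∀ n : ℕ, a.re ≠ -n) :
    ∃ C, 0 ≤ C ∧ ∀ t : ℝ,
      (1 + t ^ 2) ^ 3 * ‖Complex.Gamma (a - Complex.I * t) * Complex.Gamma (a + Complex.I * t)‖ ≤ C := by
  set n : ℕ := 6 + ⌈|a.re|⌉₊ with hn
  have hpos : 0 < a.re + n := by
    have h1 : |a.re| ≤ (⌈|a.re|⌉₊ : ℝ) := Nat.le_ceil _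
    have h2 : -|a.re| ≤ a.re := neg_abs_le _
    have : (n : ℝ) = 6 + ⌈|a.re|⌉₊ := by rw [hn]; push_cast; ring
    rw [this]; linarith
  obtain ⟨C, hC, hb⟩ := Giter a ha n
  refine ⟨C * Real.Gamma (a.re + n) ^ 2, mul_nonneg hC.le (sq_nonneg _), fun t => ?_⟩
  have hre1 : (0:ℝ) < (a + n - Complex.I * t).re := by
    simpa using hpos
  have hre2 : (0:ℝ) < (a + n + Complex.I * t).re := by
    simpa using hpos
  have hGn : ‖Complex.Gamma (a + n - Complex.I * t) * Complex.Gamma (a + n + Complex.I * t)‖ ≤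
      Real.Gamma (a.re + n) ^ 2 := by
    rw [norm_mul]
    have b1 := norm_Gamma_le_re hre1
    have b2 := norm_Gamma_le_re hre2
    have e1 : (a + n - Complex.I * t).re = a.re + n := by simp
    have e2 : (a + n + Complex.I * t).re = a.re + n := by simp
    rw [e1] at b1; rw [e2] at b2
    have := mul_le_mul b1 b2 (norm_nonneg _) ((norm_nonneg _).trans b1)
    calc ‖Complex.Gamma (a + n - Complex.I * t)‖ * ‖Complex.Gamma (a + n + Complex.I * t)‖
        ≤ Real.Gamma (a.re + n) * Real.Gamma (a.re + n) := this
      _ = Real.Gamma (a.re + n) ^ 2 := by ring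
  have h1t : (1:ℝ) ≤ 1 + t ^ 2 := by nlinarith [sq_nonneg t]
  have hsq : Real.sqrt (1 + t ^ 2) ^ 2 = 1 + t ^ 2 := Real.sq_sqrt (by linarith)
  have hs1 : (1:ℝ) ≤ Real.sqrt (1 + t ^ 2) := by
    nlinarith [Real.sqrt_nonneg (1 + t ^ 2)]
  have hcube : (1 + t ^ 2) ^ 3 ≤ Real.sqrt (1 + t ^ 2) ^ n := by
    have h6 : Real.sqrt (1 + t ^ 2) ^ 6 = (1 + t ^ 2) ^ 3 := by
      rw [show 6 = 2 * 3 by norm_num, pow_mul, hsq]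
    rw [← h6]
    exact pow_le_pow_right₀ hs1 (by omega)
  calc (1 + t ^ 2) ^ 3 * ‖Complex.Gamma (a - Complex.I * t) * Complex.Gamma (a + Complex.I * t)‖
      ≤ Real.sqrt (1 + t ^ 2) ^ n * ‖Complex.Gamma (a - Complex.I * t) * Complex.Gamma (a + Complex.I * t)‖ := by
        apply mul_le_mul_of_nonneg_right hcube (norm_nonneg _)
    _ ≤ C * ‖Complex.Gamma (a + n - Complex.I * t) * Complex.Gamma (a + n + Complex.I * t)‖ := hb t
    _ ≤ C * Real.Gamma (a.re + n) ^ 2 := by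
        apply mul_le_mul_of_nonneg_left hGn hC.le

lemma contG (a : ℂ) (ha : ∀ n : ℕ, a.re ≠ -n) :
    Continuous fun t : ℝ => Complex.Gamma (a - Complex.I * t) * Complex.Gamma (a + Complex.I * t) := by
  have h1 : Continuous fun t : ℝ => a - Complex.I * (t : ℂ) := by continuity
  have h2 : Continuous fun t : ℝ => a + Complex.I * (t : ℂ) := by continuity
  have key : ∀ (g : ℝ → ℂ), Continuous g → (∀ t, (g t).re = a.re) →
      Continuous fun t => Complex.Gamma (g t) := by
    intro g hg hre
    rw [continuous_iff_continuousAt]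
    intro t
    have hne : ∀ m : ℕ, g t ≠ -m := by
      intro m h
      apply ha m
      have := congrArg Complex.re h
      rw [hre t] at this
      simpa using this
    exact (Complex.differentiableAt_Gamma _ hne).continuousAt.comp (hg.continuousAt)
  exact (key _ h1 (fun t => by simp)).mul (key _ h2 (fun t => by simp))

lemma hasDerivAt_mul_cexp (c z : ℂ) (x : ℝ) :
    HasDerivAt (fun ξ : ℝ => z * Complex.exp (c * ξ)) (c * (z * Complex.exp (c * x))) x := by
  have h1 : HasDerivAt (fun w : ℂ => Complex.exp (c * w)) (Complex.exp (c * x) * c) (x : ℂ) := by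
    exact HasDerivAt.comp (x : ℂ) (Complex.hasDerivAt_exp ((c * x : ℂ)))
      (by simpa using (hasDerivAt_id (x : ℂ)).const_mul c)
  have h2 := (h1.comp_ofReal).const_mul z
  convert h2 using 1
  exacts [rfl, by ring]

lemma norm_cexp_line (t ξ : ℝ) : ‖Complex.exp (-Complex.I * t * ξ)‖ = 1 := by
  rw [Complex.norm_exp]
  simp
theorem ode_for_I (a : ℂ) (ha : ∀ n : ℕ, a.re ≠ -n)
    (I : ℂ → ℝ → ℂ)
    (hI : ∀ b : ℂ, ∀ ξ : ℝ, I b ξ =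
      ∫ t : ℝ, b * Complex.Gamma (b - Complex.I * t) * Complex.Gamma (b + Complex.I * t) *
        Complex.exp (-Complex.I * t * ξ)) :
    Differentiable ℝ (I a) ∧ Differentiable ℝ (deriv (I a)) ∧
      ∀ ξ : ℝ, deriv (deriv (I a)) ξ - a ^ 2 * I a ξ = -(a / (a + 1)) * I (a + 1) ξ := by
  have haRe : a.re ≠ 0 := by simpa using ha 0
  obtain ⟨C, hC0, hCb⟩ := decay a ha
  set f : ℝ → ℂ := fun t => a * Complex.Gamma (a - Complex.I * t) * Complex.Gamma (a + Complex.I * t)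
    with hf
  have hfc : Continuous f := by
    have h : Continuous fun t : ℝ =>
        a * (Complex.Gamma (a - Complex.I * t) * Complex.Gamma (a + Complex.I * t)) :=
      (continuous_const (y := a)).mul (contG a ha)
    rw [hf]
    simpa only [← mul_assoc] using h
  have hkey : ∀ k : ℕ, k ≤ 2 → ∀ t ξ : ℝ,
      |t| ^ k * ‖f t * Complex.exp (-Complex.I * t * ξ)‖ ≤ ‖a‖ * C * (1 + t ^ 2)⁻¹ := by
    intro k hk t ξ
    rw [norm_mul, norm_cexp_line, mul_one, hf]
    have h1 : ‖a * Complex.Gamma (a - Complex.I * ↑t) * Complex.Gamma (a + Complex.I * ↑t)‖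
        = ‖a‖ * ‖Complex.Gamma (a - Complex.I * ↑t) * Complex.Gamma (a + Complex.I * ↑t)‖ := by
      rw [mul_assoc, norm_mul]
    rw [h1, ← div_eq_mul_inv, le_div_iff₀ (by positivity)]
    set X := ‖Complex.Gamma (a - Complex.I * ↑t) * Complex.Gamma (a + Complex.I * ↑t)‖ with hX
    have hX0 : 0 ≤ X := norm_nonneg _
    have htk : |t| ^ k ≤ 1 + t ^ 2 := by
      interval_cases k
      · simp; nlinarith [sq_nonneg t]
      · nlinarith [sq_nonneg (|t| - 1), _root_.sq_abs t, abs_nonneg t]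
      · rw [_root_.sq_abs]; nlinarith [sq_nonneg t]
    calc |t| ^ k * (‖a‖ * X) * (1 + t ^ 2)
        ≤ (1 + t ^ 2) * (‖a‖ * X) * (1 + t ^ 2) := by
          apply mul_le_mul_of_nonneg_right (mul_le_mul_of_nonneg_right htk (by positivity))
            (by positivity)
      _ = ‖a‖ * ((1 + t ^ 2) ^ 2 * X) := by ring
      _ ≤ ‖a‖ * ((1 + t ^ 2) ^ 3 * X) := by
          apply mul_le_mul_of_nonneg_left
            (mul_le_mul_of_nonneg_right (pow_le_pow_right₀ (by nlinarith [sq_nonneg t])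
              (by norm_num)) hX0) (norm_nonneg a)
      _ ≤ ‖a‖ * C := mul_le_mul_of_nonneg_left (hCb t) (norm_nonneg a)
  have hmaj : Integrable (fun t : ℝ => ‖a‖ * C * (1 + t ^ 2)⁻¹) :=
    integrable_inv_one_add_sq.const_mul (‖a‖ * C)
  have hcont0 : ∀ ξ : ℝ, Continuous fun t : ℝ => f t * Complex.exp (-Complex.I * t * ξ) := by
    intro ξ
    exact hfc.mul (Complex.continuous_exp.comp (by continuity))
  have hcont1 : ∀ ξ : ℝ,
      Continuous fun t : ℝ => -Complex.I * t * (f t * Complex.exp (-Complex.I * t * ξ)) :=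
    fun ξ => (continuous_const.mul Complex.continuous_ofReal).mul (hcont0 ξ)
  have hcont2 : ∀ ξ : ℝ, Continuous fun t : ℝ =>
      -Complex.I * t * (-Complex.I * t * (f t * Complex.exp (-Complex.I * t * ξ))) :=
    fun ξ => (continuous_const.mul Complex.continuous_ofReal).mul (hcont1 ξ)
  have hnormI : ∀ t : ℝ, ‖-Complex.I * (t : ℂ)‖ = |t| := by
    intro t
    rw [norm_mul]
    simp
  have hint0 : ∀ ξ : ℝ, Integrable fun t : ℝ => f t * Complex.exp (-Complex.I * t * ξ) := by
    intro ξ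
    refine hmaj.mono' (hcont0 ξ).aestronglyMeasurable ?_
    filter_upwards with t
    simpa using hkey 0 (by norm_num) t ξ
  have hD1 : ∀ ξ : ℝ,
      Integrable (fun t : ℝ => -Complex.I * t * (f t * Complex.exp (-Complex.I * t * ξ))) ∧
      HasDerivAt (fun ξ : ℝ => ∫ t : ℝ, f t * Complex.exp (-Complex.I * t * ξ))
        (∫ t : ℝ, -Complex.I * t * (f t * Complex.exp (-Complex.I * t * ξ))) ξ := by
    intro ξ
    refine hasDerivAt_integral_of_dominated_loc_of_deriv_le
      (F' := fun (ξ : ℝ) (t : ℝ) => -Complex.I * t * (f t * Complex.exp (-Complex.I * t * ξ)))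
      Filter.univ_mem
      (Filter.Eventually.of_forall fun ξ' => (hcont0 ξ').aestronglyMeasurable) (hint0 ξ)
      (hcont1 ξ).aestronglyMeasurable ?_ hmaj ?_
    · filter_upwards with t
      intro ξ' _
      have h := hkey 1 (by norm_num) t ξ'
      rw [pow_one] at h
      calc ‖-Complex.I * ↑t * (f t * Complex.exp (-Complex.I * ↑t * ↑ξ'))‖
          = |t| * ‖f t * Complex.exp (-Complex.I * ↑t * ↑ξ')‖ := by rw [norm_mul, hnormI]
        _ ≤ ‖a‖ * C * (1 + t ^ 2)⁻¹ := h
    · filter_upwards with t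
      intro ξ' _
      exact hasDerivAt_mul_cexp (-Complex.I * t) (f t) ξ'
  have hD2 : ∀ ξ : ℝ,
      Integrable (fun t : ℝ =>
        -Complex.I * t * (-Complex.I * t * (f t * Complex.exp (-Complex.I * t * ξ)))) ∧
      HasDerivAt (fun ξ : ℝ => ∫ t : ℝ, -Complex.I * t * (f t * Complex.exp (-Complex.I * t * ξ)))
        (∫ t : ℝ, -Complex.I * t * (-Complex.I * t * (f t * Complex.exp (-Complex.I * t * ξ)))) ξ := by
    intro ξ
    refine hasDerivAt_integral_of_dominated_loc_of_deriv_le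
      (F' := fun (ξ : ℝ) (t : ℝ) =>
        -Complex.I * t * (-Complex.I * t * (f t * Complex.exp (-Complex.I * t * ξ))))
      Filter.univ_mem
      (Filter.Eventually.of_forall fun ξ' => (hcont1 ξ').aestronglyMeasurable) (hD1 ξ).1
      (hcont2 ξ).aestronglyMeasurable ?_ hmaj ?_
    · filter_upwards with t
      intro ξ' _
      have h := hkey 2 (by norm_num) t ξ'
      calc ‖-Complex.I * ↑t * (-Complex.I * ↑t * (f t * Complex.exp (-Complex.I * ↑t * ↑ξ')))‖
          = |t| * (|t| * ‖f t * Complex.exp (-Complex.I * ↑t * ↑ξ')‖) := by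
            rw [norm_mul, hnormI, norm_mul, hnormI]
        _ = |t| ^ 2 * ‖f t * Complex.exp (-Complex.I * ↑t * ↑ξ')‖ := by ring
        _ ≤ ‖a‖ * C * (1 + t ^ 2)⁻¹ := h
    · filter_upwards with t
      intro ξ' _
      have h := hasDerivAt_mul_cexp (-Complex.I * t) (-Complex.I * t * f t) ξ'
      convert h using 2 with ξ''
      · rfl
      · ring
      · ring
  have hIa : ∀ ξ, I a ξ = ∫ t : ℝ, f t * Complex.exp (-Complex.I * t * ξ) := by
    intro ξ
    rw [hI a ξ]
  have hIa' : I a = fun ξ : ℝ => ∫ t : ℝ, f t * Complex.exp (-Complex.I * t * ξ) := funext hIa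
  have hdiff1 : Differentiable ℝ (I a) := by
    rw [hIa']
    exact fun ξ => ((hD1 ξ).2).differentiableAt
  have hderiv1 : deriv (I a)
      = fun ξ : ℝ => ∫ t : ℝ, -Complex.I * t * (f t * Complex.exp (-Complex.I * t * ξ)) := by
    funext ξ
    rw [hIa']
    exact ((hD1 ξ).2).deriv
  have hdiff2 : Differentiable ℝ (deriv (I a)) := by
    rw [hderiv1]
    exact fun ξ => ((hD2 ξ).2).differentiableAt
  refine ⟨hdiff1, hdiff2, fun ξ => ?_⟩
  have hderiv2 : deriv (deriv (I a)) ξ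
      = ∫ t : ℝ, -Complex.I * t * (-Complex.I * t * (f t * Complex.exp (-Complex.I * t * ξ))) := by
    rw [hderiv1]
    exact ((hD2 ξ).2).deriv
  rw [hderiv2, hIa ξ]
  have ha1 : a + 1 ≠ 0 := by
    intro h
    apply ha 1
    have h2 := congrArg Complex.re h
    simp only [Complex.add_re, Complex.one_re, Complex.zero_re] at h2
    push_cast
    linarith
  have hpoint : ∀ t : ℝ,
      -Complex.I * t * (-Complex.I * t * (f t * Complex.exp (-Complex.I * t * ξ)))
        - a ^ 2 * (f t * Complex.exp (-Complex.I * t * ξ))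
      = -(a / (a + 1)) * ((a + 1) * Complex.Gamma (a + 1 - Complex.I * t) *
          Complex.Gamma (a + 1 + Complex.I * t) * Complex.exp (-Complex.I * t * ξ)) := by
    intro t
    obtain ⟨h1, h2⟩ := line_ne_zero haRe t
    rw [show a + 1 - Complex.I * ↑t = a - Complex.I * ↑t + 1 by ring,
      show a + 1 + Complex.I * ↑t = a + Complex.I * ↑t + 1 by ring,
      Complex.Gamma_add_one _ h1, Complex.Gamma_add_one _ h2, hf]
    field_simp
    ring_nf
  calc (∫ t : ℝ, -Complex.I * t * (-Complex.I * t * (f t * Complex.exp (-Complex.I * t * ξ))))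
        - a ^ 2 * ∫ t : ℝ, f t * Complex.exp (-Complex.I * t * ξ)
      = (∫ t : ℝ, -Complex.I * t * (-Complex.I * t * (f t * Complex.exp (-Complex.I * t * ξ))))
        - ∫ t : ℝ, a ^ 2 * (f t * Complex.exp (-Complex.I * t * ξ)) := by
        rw [integral_const_mul]
    _ = ∫ t : ℝ, (-Complex.I * t * (-Complex.I * t * (f t * Complex.exp (-Complex.I * t * ξ)))
          - a ^ 2 * (f t * Complex.exp (-Complex.I * t * ξ))) :=
        (integral_sub (hD2 ξ).1 ((hint0 ξ).const_mul _)).symm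
    _ = ∫ t : ℝ, -(a / (a + 1)) * ((a + 1) * Complex.Gamma (a + 1 - Complex.I * t) *
          Complex.Gamma (a + 1 + Complex.I * t) * Complex.exp (-Complex.I * t * ξ)) := by
        exact integral_congr_ae (Filter.Eventually.of_forall hpoint)
    _ = -(a / (a + 1)) * ∫ t : ℝ, (a + 1) * Complex.Gamma (a + 1 - Complex.I * t) *
          Complex.Gamma (a + 1 + Complex.I * t) * Complex.exp (-Complex.I * t * ξ) :=
        integral_const_mul _ _
    _ = -(a / (a + 1)) * I (a + 1) ξ := by rw [hI (a + 1) ξ]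
end

section
/- For a complex a with Re(a) > 0, the function t ↦ ∫_{-∞}^{∞} (e^{2itu} + e^{-2itu}) / (e^u + e^{-u})^{2a} du from ℝ to ℂ is integrable over ℝ. -/
open Complex Real MeasureTheory Set
open scoped FourierTransform

noncomputable section

namespace InnerAux

lemma q_pos (u : ℝ) : 0 < Real.exp u + Real.exp (-u) := by positivity

lemma exp_abs_le (u : ℝ) : Real.exp |u| ≤ Real.exp u + Real.exp (-u) := by
  rcases abs_cases u with ⟨h, _⟩ | ⟨h, _⟩ <;> rw [h] <;>
    nlinarith [Real.exp_pos u, Real.exp_pos (-u)]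

lemma exp_mul_exp_neg (u : ℝ) : Real.exp u * Real.exp (-u) = 1 := by
  rw [← Real.exp_add]; simp

/-- the rapidly decreasing function `u ↦ (e^u + e^{-u})^{-2a}` -/
def g (a : ℂ) (u : ℝ) : ℂ :=
  Complex.exp (-(2 * a) * Real.log (Real.exp u + Real.exp (-u)))

def φ (u : ℝ) : ℝ := (Real.exp u - Real.exp (-u)) / (Real.exp u + Real.exp (-u))

def φ' (u : ℝ) : ℝ := 4 / (Real.exp u + Real.exp (-u)) ^ 2

def g1 (a : ℂ) (u : ℝ) : ℂ := (-(2 * a) * (φ u : ℂ)) * g a u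

def g2 (a : ℂ) (u : ℝ) : ℂ :=
  (-(2 * a) * (φ' u : ℂ)) * g a u + (-(2 * a) * (φ u : ℂ)) * g1 a u

lemma abs_φ_le (u : ℝ) : |φ u| ≤ 1 := by
  rw [φ, abs_div, abs_of_pos (q_pos u), div_le_one (q_pos u)]
  rcases abs_cases (Real.exp u - Real.exp (-u)) with ⟨h, _⟩ | ⟨h, _⟩ <;> rw [h] <;>
    nlinarith [Real.exp_pos u, Real.exp_pos (-u)]

lemma abs_φ'_le (u : ℝ) : |φ' u| ≤ 1 := by
  have h4 : (4 : ℝ) ≤ (Real.exp u + Real.exp (-u)) ^ 2 := by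
    nlinarith [sq_nonneg (Real.exp u - Real.exp (-u)), exp_mul_exp_neg u]
  rw [φ', abs_div, _root_.abs_of_nonneg (by norm_num : (0:ℝ) ≤ 4),
    _root_.abs_of_pos (by positivity : (0:ℝ) < (Real.exp u + Real.exp (-u)) ^ 2),
    div_le_one (by positivity)]
  linarith

lemma norm_g (a : ℂ) (u : ℝ) :
    ‖g a u‖ = Real.exp (-(2 * a.re) * Real.log (Real.exp u + Real.exp (-u))) := by
  rw [g, Complex.norm_exp]
  congr 1
  simp [Complex.mul_re]

lemma norm_g_le (a : ℂ) (ha : 0 < a.re) (u : ℝ) :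
    ‖g a u‖ ≤ Real.exp (-(2 * a.re) * |u|) := by
  rw [norm_g]
  apply Real.exp_le_exp.2
  have hlog : |u| ≤ Real.log (Real.exp u + Real.exp (-u)) :=
    (Real.le_log_iff_exp_le (q_pos u)).2 (exp_abs_le u)
  nlinarith

lemma hasDerivAt_q (u : ℝ) :
    HasDerivAt (fun u : ℝ => Real.exp u + Real.exp (-u))
      (Real.exp u - Real.exp (-u)) u := by
  have h2 : HasDerivAt (fun u : ℝ => Real.exp (-u)) (-Real.exp (-u)) u := by
    simpa [Function.comp_def] using (Real.hasDerivAt_exp (-u)).comp u (hasDerivAt_neg u)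
  simpa [sub_eq_add_neg, Pi.add_def] using (Real.hasDerivAt_exp u).add h2

lemma hasDerivAt_g (a : ℂ) (u : ℝ) : HasDerivAt (g a) (g1 a u) u := by
  have hlog := (hasDerivAt_q u).log (q_pos u).ne'
  have hC := ((hlog.ofReal_comp).const_mul (-(2 * a))).cexp
  refine hC.congr_deriv ?_
  rw [g1, g, φ]
  push_cast
  ring

lemma hasDerivAt_φ (u : ℝ) : HasDerivAt φ (φ' u) u := by
  have hp : HasDerivAt (fun u : ℝ => Real.exp u - Real.exp (-u))
      (Real.exp u + Real.exp (-u)) u := by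
    have h2 : HasDerivAt (fun u : ℝ => Real.exp (-u)) (-Real.exp (-u)) u := by
      simpa [Function.comp_def] using (Real.hasDerivAt_exp (-u)).comp u (hasDerivAt_neg u)
    simpa [sub_eq_add_neg, sub_neg_eq_add, Pi.add_def, Pi.neg_def] using (Real.hasDerivAt_exp u).sub h2
  have h := hp.div (hasDerivAt_q u) (q_pos u).ne'
  refine h.congr_deriv ?_
  rw [φ']
  have h1 := exp_mul_exp_neg u
  field_simp
  ring_nf
  nlinarith [h1]

lemma hasDerivAt_g1 (a : ℂ) (u : ℝ) : HasDerivAt (g1 a) (g2 a u) u := by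
  have h1 : HasDerivAt (fun u : ℝ => -(2 * a) * (φ u : ℂ)) (-(2 * a) * (φ' u : ℂ)) u :=
    ((hasDerivAt_φ u).ofReal_comp).const_mul _
  have h := h1.mul (hasDerivAt_g a u)
  exact h

lemma cont_q : Continuous fun u : ℝ => Real.exp u + Real.exp (-u) := by
  exact Real.continuous_exp.add (Real.continuous_exp.comp continuous_neg)

lemma cont_logq : Continuous fun u : ℝ => Real.log (Real.exp u + Real.exp (-u)) :=
  cont_q.log fun u => (q_pos u).ne'

lemma cont_g (a : ℂ) : Continuous (g a) :=
  Complex.continuous_exp.comp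
    (continuous_const.mul (Complex.continuous_ofReal.comp cont_logq))

lemma cont_φ : Continuous φ := by
  apply Continuous.div (Real.continuous_exp.sub (Real.continuous_exp.comp continuous_neg))
    cont_q fun u => (q_pos u).ne'

lemma cont_φ' : Continuous φ' := by
  apply Continuous.div continuous_const (cont_q.pow 2)
    fun u => (by positivity : (0:ℝ) < (Real.exp u + Real.exp (-u)) ^ 2).ne'

lemma cont_g1 (a : ℂ) : Continuous (g1 a) :=
  (continuous_const.mul (Complex.continuous_ofReal.comp cont_φ)).mul (cont_g a)

lemma cont_g2 (a : ℂ) : Continuous (g2 a) :=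
  ((continuous_const.mul (Complex.continuous_ofReal.comp cont_φ')).mul (cont_g a)).add
    ((continuous_const.mul (Complex.continuous_ofReal.comp cont_φ)).mul (cont_g1 a))

lemma integrable_exp_neg_abs {c : ℝ} (hc : 0 < c) :
    Integrable fun u : ℝ => Real.exp (-c * |u|) := by
  have hIoi : IntegrableOn (fun u : ℝ => Real.exp (-c * |u|)) (Ioi 0) := by
    refine (exp_neg_integrableOn_Ioi 0 hc).congr_fun (fun x hx => ?_) measurableSet_Ioi
    rw [abs_of_pos hx]
  have hIic : IntegrableOn (fun u : ℝ => Real.exp (-c * |u|)) (Iic 0) := by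
    rw [← Measure.map_neg_eq_self (volume : Measure ℝ)]
    have m : MeasurableEmbedding fun x : ℝ => -x :=
      (Homeomorph.neg ℝ).measurableEmbedding
    rw [m.integrableOn_map_iff]
    simp_rw [Function.comp_def, abs_neg, neg_preimage, neg_Iic, neg_zero]
    exact Iff.mpr integrableOn_Ici_iff_integrableOn_Ioi hIoi
  have h := hIic.union hIoi
  rwa [Iic_union_Ioi, integrableOn_univ] at h

lemma integrable_g (a : ℂ) (ha : 0 < a.re) : Integrable (g a) := by
  refine (integrable_exp_neg_abs (c := 2 * a.re) (by linarith)).mono'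
    (cont_g a).aestronglyMeasurable (ae_of_all _ fun u => ?_)
  exact norm_g_le a ha u

lemma integrable_g1 (a : ℂ) (ha : 0 < a.re) : Integrable (g1 a) := by
  refine ((integrable_g a ha).norm.const_mul (2 * ‖a‖)).mono'
    (cont_g1 a).aestronglyMeasurable (ae_of_all _ fun u => ?_)
  rw [g1, norm_mul, norm_mul]
  have h1 : ‖-(2 * a)‖ = 2 * ‖a‖ := by
    rw [norm_neg, norm_mul]; norm_num
  have h2 : ‖((φ u : ℝ) : ℂ)‖ ≤ 1 := by
    rw [Complex.norm_real, Real.norm_eq_abs]; exact abs_φ_le u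
  calc ‖-(2 * a)‖ * ‖((φ u : ℝ) : ℂ)‖ * ‖g a u‖
      ≤ (2 * ‖a‖) * 1 * ‖g a u‖ := by
        apply mul_le_mul_of_nonneg_right _ (norm_nonneg _)
        rw [h1]
        exact mul_le_mul_of_nonneg_left h2 (by positivity)
    _ = 2 * ‖a‖ * ‖g a u‖ := by ring

lemma norm_g1_le (a : ℂ) (u : ℝ) : ‖g1 a u‖ ≤ 2 * ‖a‖ * ‖g a u‖ := by
  rw [g1, norm_mul, norm_mul]
  have h1 : ‖-(2 * a)‖ = 2 * ‖a‖ := by rw [norm_neg, norm_mul]; norm_num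
  have h2 : ‖((φ u : ℝ) : ℂ)‖ ≤ 1 := by
    rw [Complex.norm_real, Real.norm_eq_abs]; exact abs_φ_le u
  calc ‖-(2 * a)‖ * ‖((φ u : ℝ) : ℂ)‖ * ‖g a u‖
      ≤ (2 * ‖a‖) * 1 * ‖g a u‖ := by
        apply mul_le_mul_of_nonneg_right _ (norm_nonneg _)
        rw [h1]
        exact mul_le_mul_of_nonneg_left h2 (by positivity)
    _ = 2 * ‖a‖ * ‖g a u‖ := by ring

lemma integrable_g2 (a : ℂ) (ha : 0 < a.re) : Integrable (g2 a) := by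
  refine ((integrable_g a ha).norm.const_mul (2 * ‖a‖ + 2 * ‖a‖ * (2 * ‖a‖))).mono'
    (cont_g2 a).aestronglyMeasurable (ae_of_all _ fun u => ?_)
  rw [g2]
  have h1 : ‖-(2 * a)‖ = 2 * ‖a‖ := by rw [norm_neg, norm_mul]; norm_num
  have h2 : ‖((φ u : ℝ) : ℂ)‖ ≤ 1 := by
    rw [Complex.norm_real, Real.norm_eq_abs]; exact abs_φ_le u
  have h2' : ‖((φ' u : ℝ) : ℂ)‖ ≤ 1 := by
    rw [Complex.norm_real, Real.norm_eq_abs]; exact abs_φ'_le u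
  have hA : ‖-(2 * a) * ((φ' u : ℝ) : ℂ) * g a u‖ ≤ 2 * ‖a‖ * ‖g a u‖ := by
    rw [norm_mul, norm_mul, h1]
    calc 2 * ‖a‖ * ‖((φ' u : ℝ) : ℂ)‖ * ‖g a u‖
        ≤ 2 * ‖a‖ * 1 * ‖g a u‖ := by
          apply mul_le_mul_of_nonneg_right _ (norm_nonneg _)
          exact mul_le_mul_of_nonneg_left h2' (by positivity)
      _ = 2 * ‖a‖ * ‖g a u‖ := by ring
  have hB : ‖-(2 * a) * ((φ u : ℝ) : ℂ) * g1 a u‖ ≤ 2 * ‖a‖ * (2 * ‖a‖ * ‖g a u‖) := by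
    rw [norm_mul, norm_mul, h1]
    calc 2 * ‖a‖ * ‖((φ u : ℝ) : ℂ)‖ * ‖g1 a u‖
        ≤ 2 * ‖a‖ * 1 * ‖g1 a u‖ := by
          apply mul_le_mul_of_nonneg_right _ (norm_nonneg _)
          exact mul_le_mul_of_nonneg_left h2 (by positivity)
      _ = 2 * ‖a‖ * ‖g1 a u‖ := by ring
      _ ≤ 2 * ‖a‖ * (2 * ‖a‖ * ‖g a u‖) :=
          mul_le_mul_of_nonneg_left (norm_g1_le a u) (by positivity)
  calc ‖_ + _‖ ≤ _ + _ := norm_add_le _ _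
    _ ≤ 2 * ‖a‖ * ‖g a u‖ + 2 * ‖a‖ * (2 * ‖a‖ * ‖g a u‖) := add_le_add hA hB
    _ = (2 * ‖a‖ + 2 * ‖a‖ * (2 * ‖a‖)) * ‖g a u‖ := by ring

lemma fourier_integrable (a : ℂ) (ha : 0 < a.re) : Integrable (𝓕 (g a)) := by
  have hg := integrable_g a ha
  have hg1 := integrable_g1 a ha
  have hg2 := integrable_g2 a ha
  have hd1 : deriv (g a) = g1 a := funext fun u => (hasDerivAt_g a u).deriv
  have hd2 : deriv (g1 a) = g2 a := funext fun u => (hasDerivAt_g1 a u).deriv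
  have hdiff : Differentiable ℝ (g a) := fun u => (hasDerivAt_g a u).differentiableAt
  have hdiff1 : Differentiable ℝ (g1 a) := fun u => (hasDerivAt_g1 a u).differentiableAt
  have key1 := Real.fourier_deriv hg hdiff (hd1 ▸ hg1)
  have key2 := Real.fourier_deriv hg1 hdiff1 (hd2 ▸ hg2)
  rw [hd1] at key1
  rw [hd2] at key2
  set M0 := ∫ u : ℝ, ‖g a u‖ with hM0
  set M2 := ∫ u : ℝ, ‖g2 a u‖ with hM2
  set C := M0 + M2 / (4 * π ^ 2) with hC
  have hπ : (0:ℝ) < π := Real.pi_pos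
  have hb : ∀ x : ℝ, ‖𝓕 (g a) x‖ ≤ C * (1 + x ^ 2)⁻¹ := by
    intro x
    have h0 : ‖𝓕 (g a) x‖ ≤ M0 :=
      VectorFourier.norm_fourierIntegral_le_integral_norm _ _ _ _ _
    have h2' : ‖𝓕 (g2 a) x‖ ≤ M2 :=
      VectorFourier.norm_fourierIntegral_le_integral_norm _ _ _ _ _
    have hF2 : ‖𝓕 (g2 a) x‖ = (2 * π * |x|) ^ 2 * ‖𝓕 (g a) x‖ := by
      rw [key2]
      simp only
      rw [key1]
      simp only [norm_smul]
      have hn : ‖2 * (π:ℂ) * Complex.I * (x:ℂ)‖ = 2 * π * |x| := by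
        simp only [norm_mul, Complex.norm_real, Complex.norm_I,
          Complex.norm_two, Real.norm_eq_abs, _root_.abs_of_pos hπ, mul_one]
      rw [hn]
      ring
    have hx2 : x ^ 2 * ‖𝓕 (g a) x‖ ≤ M2 / (4 * π ^ 2) := by
      rw [le_div_iff₀ (by positivity)]
      have : (2 * π * |x|) ^ 2 * ‖𝓕 (g a) x‖ ≤ M2 := hF2 ▸ h2'
      have habs : (2 * π * |x|) ^ 2 = 4 * π ^ 2 * x ^ 2 := by
        rw [mul_pow, mul_pow, _root_.sq_abs]; ring
      rw [habs] at this
      nlinarith [this]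
    rw [← div_eq_mul_inv, le_div_iff₀ (by positivity : (0:ℝ) < 1 + x ^ 2), hC]
    nlinarith [h0, hx2]
  have hcont : Continuous (𝓕 (g a)) :=
    VectorFourier.fourierIntegral_continuous Real.continuous_fourierChar
      (by exact continuous_inner) hg
  refine (integrable_inv_one_add_sq.const_mul C).mono'
    hcont.aestronglyMeasurable (ae_of_all _ fun x => hb x)

lemma g_eq_inv_cpow (a : ℂ) (u : ℝ) :
    g a u = (((Real.exp u + Real.exp (-u) : ℝ) : ℂ) ^ (2 * a))⁻¹ := by
  have hq0 : ((Real.exp u + Real.exp (-u) : ℝ) : ℂ) ≠ 0 := by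
    exact_mod_cast (q_pos u).ne'
  rw [Complex.cpow_def_of_ne_zero hq0, ← Complex.exp_neg, g,
    ← Complex.ofReal_log (q_pos u).le]
  ring_nf

end InnerAux

open InnerAux

theorem inner_integral_integrable (a : ℂ) (ha : 0 < a.re) :
    Integrable (fun t : ℝ => ∫ u : ℝ,
      (Complex.exp (2 * Complex.I * t * u) + Complex.exp (-(2 * Complex.I * t * u))) /
        ((Real.exp u + Real.exp (-u) : ℝ) : ℂ) ^ (2 * a)) := by
  have hg := integrable_g a ha
  have h𝓕 := fourier_integrable a ha
  have hπ : (π : ℝ) ≠ 0 := Real.pi_ne_zero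
  have key : (fun t : ℝ => ∫ u : ℝ,
      (Complex.exp (2 * Complex.I * t * u) + Complex.exp (-(2 * Complex.I * t * u))) /
        ((Real.exp u + Real.exp (-u) : ℝ) : ℂ) ^ (2 * a))
      = fun t : ℝ => 𝓕 (g a) (-π⁻¹ * t) + 𝓕 (g a) (π⁻¹ * t) := by
    funext t
    have meas1 : ∀ s : ℝ, AEStronglyMeasurable
        (fun u : ℝ => Complex.exp ((s * Complex.I) * u)) volume := by
      intro s
      exact (Complex.continuous_exp.comp (continuous_const.mul
        Complex.continuous_ofReal)).aestronglyMeasurable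
    have bnd1 : ∀ (s : ℝ) (u : ℝ), ‖Complex.exp ((s * Complex.I) * u)‖ ≤ 1 := by
      intro s u
      rw [Complex.norm_exp]
      simp
    have e1 : Integrable (fun u : ℝ =>
        Complex.exp (2 * Complex.I * t * u) * g a u) := by
      refine hg.bdd_mul (c := 1) ?_ (ae_of_all _ fun u => ?_)
      · exact (Complex.continuous_exp.comp (by continuity)).aestronglyMeasurable
      · rw [Complex.norm_exp]
        simp
    have e2 : Integrable (fun u : ℝ =>
        Complex.exp (-(2 * Complex.I * t * u)) * g a u) := by
      refine hg.bdd_mul (c := 1) ?_ (ae_of_all _ fun u => ?_)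
      · exact (Complex.continuous_exp.comp (by continuity)).aestronglyMeasurable
      · rw [Complex.norm_exp]
        simp
    have div_eq : ∀ u : ℝ,
        (Complex.exp (2 * Complex.I * t * u) + Complex.exp (-(2 * Complex.I * t * u))) /
          ((Real.exp u + Real.exp (-u) : ℝ) : ℂ) ^ (2 * a)
        = Complex.exp (2 * Complex.I * t * u) * g a u
          + Complex.exp (-(2 * Complex.I * t * u)) * g a u := by
      intro u
      rw [div_eq_mul_inv, ← g_eq_inv_cpow, add_mul]
    simp only [div_eq]
    rw [integral_add e1 e2]
    congr 1
    · rw [Real.fourier_real_eq_integral_exp_smul]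
      congr 1
      funext u
      rw [smul_eq_mul]
      congr 1
      have hr : -2 * π * u * (-π⁻¹ * t) = 2 * t * u := by
        field_simp
      rw [hr]
      push_cast
      ring
    · rw [Real.fourier_real_eq_integral_exp_smul]
      congr 1
      funext u
      rw [smul_eq_mul]
      congr 1
      have hr : -2 * π * u * (π⁻¹ * t) = -(2 * t * u) := by
        field_simp
      rw [hr]
      push_cast
      ring
  rw [key]
  exact (h𝓕.comp_mul_left' (by simpa using hπ : (-π⁻¹ : ℝ) ≠ 0)).add
    (h𝓕.comp_mul_left' (inv_ne_zero hπ))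
end
end
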